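/- Let T̂ = P·T as above and r ≥ 1. If x, y, z ∈ {0,…,n−1} satisfy w(x)+1 = w(y) and w(y)+1 = w(z), then the set difference {j : (T̂)^r(y,j) > 0} \ {j : (T̂)^r(x,j) > 0} is a subset of {j : (T̂)^r(z,j) > 0}. -/
import Mathlib

open Matrix Finset

def Tmat (n : ℕ) : Matrix (Fin n) (Fin n) ℕ :=
  Matrix.of fun i j => if (i : ℕ) = (j : ℕ) ∨ (i : ℕ) = (j : ℕ) + 1 then 1 else 0

def Pmat {n : ℕ} (w : Fin n → Fin n) : Matrix (Fin n) (Fin n) ℕ :=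
  Matrix.of fun i j => if j = w i then 1 else 0

def That {n : ℕ} (w : Fin n → Fin n) : Matrix (Fin n) (Fin n) ℕ :=
  Pmat w * Tmat n

lemma That_pos_iff {n : ℕ} (w : Fin n → Fin n) (i k : Fin n) :
    0 < That w i k ↔ (k = w i ∨ (k : ℕ) + 1 = (w i : ℕ)) := by
  have : That w i k = Tmat n (w i) k := by
    simp [That, Pmat, Matrix.mul_apply]
  rw [this, Tmat]
  simp only [Matrix.of_apply, Fin.ext_iff]
  split_ifs with h <;> omega

lemma mul_pos_iff' {n : ℕ} (A B : Matrix (Fin n) (Fin n) ℕ) (i j : Fin n) :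
    0 < (A * B) i j ↔ ∃ k, 0 < A i k ∧ 0 < B k j := by
  rw [Matrix.mul_apply]
  rw [Nat.pos_iff_ne_zero, Ne, Finset.sum_eq_zero_iff]
  push_neg
  constructor
  · rintro ⟨k, _, hk⟩
    exact ⟨k, Nat.pos_of_ne_zero fun h => hk (by simp [h]),
      Nat.pos_of_ne_zero fun h => hk (by simp [h])⟩
  · rintro ⟨k, h1, h2⟩
    exact ⟨k, Finset.mem_univ k, Nat.pos_iff_ne_zero.mp (Nat.mul_pos h1 h2)⟩

theorem stmt_2 (n : ℕ) (hn : 1 ≤ n) (w : Fin n → Fin n) (hw : Function.Bijective w)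
    (r : ℕ) (hr : 1 ≤ r) (x y z : Fin n)
    (hxy : (w x : ℕ) + 1 = (w y : ℕ)) (hyz : (w y : ℕ) + 1 = (w z : ℕ)) :
    ({j : Fin n | 0 < (That w ^ r) y j} \ {j : Fin n | 0 < (That w ^ r) x j})
      ⊆ {j : Fin n | 0 < (That w ^ r) z j} := by
  obtain ⟨m, rfl⟩ : ∃ m, r = m + 1 := ⟨r - 1, (Nat.succ_pred_eq_of_pos hr).symm⟩
  intro j hj
  simp only [Set.mem_diff, Set.mem_setOf_eq] at hj ⊢
  obtain ⟨hy, hx⟩ := hj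
  rw [pow_succ', mul_pos_iff'] at hy ⊢
  obtain ⟨k, hk1, hk2⟩ := hy
  rcases (That_pos_iff w y k).mp hk1 with rfl | hk
  · -- k = w y : go via z
    exact ⟨w y, (That_pos_iff w z (w y)).mpr (Or.inr hyz), hk2⟩
  · -- k = w x : contradiction with hx
    have hkx : k = w x := Fin.ext (by omega)
    exact absurd (by
      rw [pow_succ', mul_pos_iff']
      exact ⟨k, (That_pos_iff w x k).mpr (Or.inl hkx), hk2⟩) hx
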